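/- arXiv:2512.00687 — 2 statements merged into one kernel-verified Lean document; each statement's English description precedes it below -/
import Mathlib

section
/- Let K be a field, ι a finite index set, and L : ι → Lie algebras over K, each simple (non-abelian with no ideals other than 0 and the whole algebra). Let h be a Lie subalgebra of the product Π_{i∈ι} L_i such that for every i the coordinate projection h → L_i is surjective, and for every pair i ≠ j the projection h → L_i × L_j is surjective. Then h = Π_{i∈ι} L_i. -/
section PiLie

variable {K : Type*} [CommRing K]
variable {ι : Type*} {L : ι → Type*} [∀ i, LieRing (L i)]

/-- The product of a family of Lie rings, with componentwise bracket. -/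
instance Pi.instLieRing : LieRing (∀ i, L i) where
  bracket x y := fun i => ⁅x i, y i⁆
  add_lie x y z := funext fun i => add_lie (x i) (y i) (z i)
  lie_add x y z := funext fun i => lie_add (x i) (y i) (z i)
  lie_self x := funext fun i => lie_self (x i)
  leibniz_lie x y z := funext fun i => leibniz_lie (x i) (y i) (z i)

/-- The product of a family of Lie algebras, with componentwise bracket. -/
instance Pi.instLieAlgebra [∀ i, LieAlgebra K (L i)] : LieAlgebra K (∀ i, L i) where
  lie_smul t x y := funext fun i => lie_smul t (x i) (y i)

end PiLie

/-- A simple Lie algebra is perfect: brackets span the whole algebra. -/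
lemma simple_perfect_span (K : Type*) [Field K] (M : Type*) [LieRing M] [LieAlgebra K M]
    [LieAlgebra.IsSimple K M] :
    Submodule.span K {m : M | ∃ x y : M, ⁅x, y⁆ = m} = ⊤ := by
  have hI : ⁅(⊤ : LieIdeal K M), (⊤ : LieIdeal K M)⁆ = ⊤ := by
    rcases LieAlgebra.IsSimple.eq_bot_or_eq_top ⁅(⊤ : LieIdeal K M), (⊤ : LieIdeal K M)⁆ with
      hb | ht
    · exfalso
      apply LieAlgebra.IsSimple.non_abelian (R := K) (L := M)
      constructor
      intro x y
      have : ⁅(x : M), (y : M)⁆ ∈ ⁅(⊤ : LieIdeal K M), (⊤ : LieIdeal K M)⁆ :=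
        LieSubmodule.lie_mem_lie trivial trivial
      rw [hb] at this
      simpa using this
    · exact ht
  have hset : {m : M | ∃ x y : M, ⁅x, y⁆ = m} =
      {m : M | ∃ (x : (⊤ : LieIdeal K M)) (n : (⊤ : LieIdeal K M)), ⁅(x : M), (n : M)⁆ = m} := by
    ext m
    constructor
    · rintro ⟨x, y, rfl⟩; exact ⟨⟨x, trivial⟩, ⟨y, trivial⟩, rfl⟩
    · rintro ⟨x, y, rfl⟩; exact ⟨x, y, rfl⟩
  rw [hset, ← LieSubmodule.lieIdeal_oper_eq_linear_span, hI]
  ext m; simp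

/-- A Lie subalgebra of a finite product of simple Lie algebras which surjects onto every
factor and onto every pair of distinct factors is the whole product. -/
theorem stmt_2 (K : Type*) [Field K] (ι : Type*) [Finite ι]
    (L : ι → Type*) [∀ i, LieRing (L i)] [∀ i, LieAlgebra K (L i)]
    [∀ i, LieAlgebra.IsSimple K (L i)]
    (h : LieSubalgebra K (∀ i, L i))
    (hproj : ∀ i : ι, Function.Surjective fun x : h => (x : ∀ i, L i) i)
    (hpair : ∀ i j : ι, i ≠ j →
      Function.Surjective fun x : h => (((x : ∀ i, L i) i, (x : ∀ i, L i) j) : L i × L j)) :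
    h = ⊤ := by
  cases nonempty_fintype ι
  classical
  -- Key claim: by induction on a list `js` of indices distinct from `i`, every `a : L i` is
  -- the `i`-th coordinate of an element of `h` vanishing at all indices in `js`.
  have claim : ∀ (i : ι) (js : List ι), (∀ j ∈ js, j ≠ i) →
      ∀ a : L i, ∃ y ∈ h, y i = a ∧ ∀ j ∈ js, y j = 0 := by
    intro i js
    induction js with
    | nil =>
      intro _ a
      obtain ⟨y, hy⟩ := hproj i a
      exact ⟨(y : ∀ k, L k), y.2, hy, by simp⟩
    | cons j js ih =>
      intro hne a
      have hji : j ≠ i := hne j List.mem_cons_self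
      have hjs : ∀ j' ∈ js, j' ≠ i := fun j' hj' => hne j' (List.mem_cons_of_mem j hj')
      have ha : a ∈ Submodule.span K {m : L i | ∃ x y : L i, ⁅x, y⁆ = m} := by
        rw [simple_perfect_span K (L i)]; trivial
      refine Submodule.span_induction ?_ ?_ ?_ ?_ ha
      · rintro m ⟨b, c, rfl⟩
        obtain ⟨y, hyh, hyi, hyjs⟩ := ih hjs c
        obtain ⟨x, hx⟩ := hpair i j (Ne.symm hji) (b, 0)
        have hxi : (x : ∀ k, L k) i = b := congrArg Prod.fst hx
        have hxj : (x : ∀ k, L k) j = 0 := congrArg Prod.snd hx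
        refine ⟨⁅(x : ∀ k, L k), y⁆, h.lie_mem x.2 hyh, ?_, ?_⟩
        · show ⁅(x : ∀ k, L k) i, y i⁆ = ⁅b, c⁆
          rw [hxi, hyi]
        · intro j' hj'
          rcases List.mem_cons.mp hj' with rfl | hj'
          · show ⁅(x : ∀ k, L k) j', y j'⁆ = 0
            rw [hxj, zero_lie]
          · show ⁅(x : ∀ k, L k) j', y j'⁆ = 0
            rw [hyjs j' hj', lie_zero]
      · exact ⟨0, h.zero_mem, rfl, by simp⟩
      · rintro m₁ m₂ _ _ ⟨y₁, hy₁, hyi₁, hz₁⟩ ⟨y₂, hy₂, hyi₂, hz₂⟩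
        refine ⟨y₁ + y₂, h.add_mem hy₁ hy₂, ?_, ?_⟩
        · show y₁ i + y₂ i = m₁ + m₂; rw [hyi₁, hyi₂]
        · intro j' hj'
          show y₁ j' + y₂ j' = 0
          rw [hz₁ j' hj', hz₂ j' hj', add_zero]
      · rintro t m _ ⟨y, hy, hyi, hz⟩
        refine ⟨t • y, h.smul_mem t hy, ?_, ?_⟩
        · show t • y i = t • m; rw [hyi]
        · intro j' hj'
          show t • y j' = 0
          rw [hz j' hj', smul_zero]
  -- Hence `h` contains all "single"-supported elements.
  have key : ∀ (i : ι) (a : L i), (Pi.single i a : ∀ k, L k) ∈ h := by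
    intro i a
    obtain ⟨y, hyh, hyi, hz⟩ := claim i ((Finset.univ.erase i).toList)
      (fun j hj => (Finset.mem_erase.mp (Finset.mem_toList.mp hj)).1) a
    have : y = Pi.single i a := by
      funext k
      by_cases hk : k = i
      · subst hk; rw [hyi, Pi.single_eq_same]
      · rw [Pi.single_eq_of_ne hk]
        exact hz k (Finset.mem_toList.mpr (Finset.mem_erase.mpr ⟨hk, Finset.mem_univ k⟩))
    rwa [this] at hyh
  rw [eq_top_iff]
  intro x _
  rw [← Finset.univ_sum_single x]
  exact sum_mem fun i _ => key i (x i)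
end

section
/- Let K be a field, ι a finite index set, and L : ι → Lie algebras over K, each simple (non-abelian with no ideals other than 0 and the whole algebra). Let h be a Lie subalgebra of the product Π_{i∈ι} L_i such that for every i the coordinate projection h → L_i is surjective. If h is not equal to the full product Π_{i∈ι} L_i, then there exist indices i ≠ j and an isomorphism of Lie algebras e : L_i ≃ L_j such that every element x ∈ h satisfies x_j = e (x_i). -/
section AuxLemmas

variable {K : Type*} [Field K]
variable {ι : Type*} [DecidableEq ι] {L : ι → Type*} [∀ i, LieRing (L i)]
  [∀ i, LieAlgebra K (L i)]

@[simp] lemma pi_lie_apply (x y : ∀ i, L i) (i : ι) : ⁅x, y⁆ i = ⁅x i, y i⁆ := rfl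

lemma lie_single (z : ∀ i, L i) (i : ι) (c : L i) :
    ⁅z, (Pi.single i c : ∀ k, L k)⁆ = Pi.single i ⁅z i, c⁆ := by
  funext k
  rcases eq_or_ne k i with rfl | hk
  · simp
  · simp [Pi.single_eq_of_ne hk]

lemma single_lie_single (i : ι) (a b : L i) :
    ⁅(Pi.single i a : ∀ k, L k), Pi.single i b⁆ = Pi.single i ⁅a, b⁆ := by
  rw [lie_single, Pi.single_eq_same]

/-- The Lie algebra endomorphism of a product that zeroes out one coordinate. -/
def zeroOut (i₀ : ι) : (∀ i, L i) →ₗ⁅K⁆ (∀ i, L i) where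
  toFun x := fun i => if i = i₀ then 0 else x i
  map_add' x y := funext fun i => by by_cases hi : i = i₀ <;> simp [hi]
  map_smul' t x := funext fun i => by by_cases hi : i = i₀ <;> simp [hi]
  map_lie' {x y} := funext fun i => by by_cases hi : i = i₀ <;> simp [hi]

@[simp] lemma zeroOut_apply (i₀ : ι) (x : ∀ i, L i) (i : ι) :
    zeroOut (K := K) i₀ x i = if i = i₀ then 0 else x i := rfl

lemma eq_zero_of_lie_all {M : Type*} [LieRing M] [LieAlgebra K M]
    [LieAlgebra.IsSimple K M] (a : M) (ha : ∀ b : M, ⁅b, a⁆ = 0) : a = 0 := by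
  have h1 : a ∈ LieAlgebra.center K M := (LieModule.mem_maxTrivSubmodule K M M a).2 ha
  rwa [LieAlgebra.center_eq_bot, LieSubmodule.mem_bot] at h1

variable [∀ i, LieAlgebra.IsSimple K (L i)]

lemma aux_main (s : Finset ι) :
    ∀ h : LieSubalgebra K (∀ i, L i),
    (∀ x ∈ h, ∀ i ∉ s, x i = 0) →
    (∀ i ∈ s, ∀ a : L i, ∃ x ∈ h, x i = a) →
    (∃ f : ∀ i, L i, (∀ i ∉ s, f i = 0) ∧ f ∉ h) →
    ∃ i ∈ s, ∃ j ∈ s, i ≠ j ∧ ∃ e : L i ≃ₗ⁅K⁆ L j, ∀ x ∈ h, x j = e (x i) := by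
  induction s using Finset.strongInduction with
  | _ s IH =>
  intro h hsupp hproj hne
  -- Step 1 : find a coordinate i₀ ∈ s whose "single" ideal is trivial
  have singleIdeal : ∀ i ∈ s,
      (∀ c : L i, (Pi.single i c : ∀ k, L k) ∈ h → c = 0) ∨
      (∀ c : L i, (Pi.single i c : ∀ k, L k) ∈ h) := by
    intro i hi
    let J : LieIdeal K (L i) :=
      { carrier := {c | (Pi.single i c : ∀ k, L k) ∈ h}
        add_mem' := fun {a b} ha hb => by
          have := h.add_mem ha hb
          simpa [← Pi.single_add] using this
        zero_mem' := by simp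
        smul_mem' := fun t a ha => by
          have := h.smul_mem t ha
          simpa [← Pi.single_smul] using this
        lie_mem := fun {b c} hc => by
          obtain ⟨z, hz, hzi⟩ := hproj i hi b
          have hmem := h.lie_mem hz hc
          rw [lie_single, hzi] at hmem
          exact hmem }
    rcases LieAlgebra.IsSimple.eq_bot_or_eq_top (R := K) J with hJ | hJ
    · left
      intro c hc
      have hcJ : c ∈ J := hc
      rw [hJ] at hcJ
      simpa using hcJ
    · right
      intro c
      have hcJ : c ∈ (⊤ : LieIdeal K (L i)) := trivial
      rw [← hJ] at hcJ
      exact hcJ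
  by_cases hall : ∀ i ∈ s, ∀ c : L i, (Pi.single i c : ∀ k, L k) ∈ h
  · exfalso
    obtain ⟨f, hf, hfh⟩ := hne
    apply hfh
    have hdecomp : f = ∑ i ∈ s, Pi.single i (f i) := by
      funext k
      rw [Finset.sum_apply, Finset.sum_pi_single]
      by_cases hk : k ∈ s
      · simp [hk]
      · simp [hk, hf k hk]
    rw [hdecomp]
    exact sum_mem fun i hi => hall i hi (f i)
  push_neg at hall
  obtain ⟨i₀, hi₀, c₀', hc₀'⟩ := hall
  have hJ0 : ∀ c : L i₀, (Pi.single i₀ c : ∀ k, L k) ∈ h → c = 0 := by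
    rcases singleIdeal i₀ hi₀ with H | H
    · exact H
    · exact absurd (H c₀') hc₀'
  set s' : Finset ι := s.erase i₀ with hs'
  set Z : (∀ i, L i) →ₗ⁅K⁆ (∀ i, L i) := zeroOut (K := K) i₀ with hZ
  -- well-definedness
  have W : ∀ x ∈ h, ∀ x' ∈ h, Z x = Z x' → x i₀ = x' i₀ := by
    intro x hx x' hx' hzz
    have hd : x - x' ∈ h := sub_mem hx hx'
    have hdz : ∀ i, i ≠ i₀ → (x - x') i = 0 := by
      intro i hi
      have := congrFun hzz i
      simp only [hZ, zeroOut_apply, if_neg hi] at this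
      simp [this]
    have hds : (x - x' : ∀ i, L i) = Pi.single i₀ ((x - x') i₀) := by
      funext k
      rcases eq_or_ne k i₀ with rfl | hk
      · simp
      · rw [hdz k hk, Pi.single_eq_of_ne hk]
    have h0 : (x - x') i₀ = 0 := hJ0 _ (by rw [← hds]; exact hd)
    have h0' : x i₀ - x' i₀ = 0 := h0
    exact sub_eq_zero.mp h0'
  by_cases hfull : ∀ y : ∀ i, L i, (∀ i ∉ s', y i = 0) → ∃ x ∈ h, Z x = y
  · -- Case B : the projection away from i₀ is everything supported on s'
    haveI : Nontrivial (L i₀) := LieModule.nontrivial_of_isIrreducible K (L i₀) (L i₀)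
    have hsingle : ∀ k ∈ s', ∀ c : L k, ∃ x ∈ h, Z x = Pi.single k c := by
      intro k hk c
      refine hfull _ fun i hi => Pi.single_eq_of_ne (fun hik => hi (by rw [hik]; exact hk)) _
    -- the decomposition lemma : every x ∈ h has x i₀ equal to a sum of contributions
    have hsum : ∀ x ∈ h, ∀ y : {k // k ∈ s'} → ∀ i, L i, (∀ k, y k ∈ h) →
        (∀ k : {k // k ∈ s'}, Z (y k) = Pi.single (k : ι) (x (k : ι))) →
        x i₀ = ∑ k ∈ s'.attach, y k i₀ := by
      intro x hx y hyh hyZ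
      have hT : (∑ k ∈ s'.attach, y k) ∈ h := sum_mem fun k _ => hyh k
      have hZT : Z (∑ k ∈ s'.attach, y k) = Z x := by
        have hms : Z (∑ k ∈ s'.attach, y k) = ∑ k ∈ s'.attach, Z (y k) :=
          map_sum (Z : (∀ i, L i) →ₗ[K] ∀ i, L i) y s'.attach
        rw [hms]
        funext i
        rw [Finset.sum_apply]
        simp only [hyZ]
        rcases eq_or_ne i i₀ with heq | hi
        · subst heq
          have hzero : ∑ k ∈ s'.attach, Pi.single (k : ι) (x (k : ι)) i = 0 :=
            Finset.sum_eq_zero fun k _ =>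
              Pi.single_eq_of_ne (Ne.symm (Finset.mem_erase.mp k.2).1) _
          rw [hzero]
          simp [hZ]
        · have hatt : ∑ k ∈ s'.attach, Pi.single (k : ι) (x (k : ι)) i
              = ∑ k ∈ s', Pi.single k (x k) i :=
            Finset.sum_attach s' (fun k => Pi.single k (x k) i)
          rw [hatt, Finset.sum_pi_single]
          by_cases hi' : i ∈ s'
          · simp [hZ, hi', hi]
          · have hns : i ∉ s := fun hin => hi' (Finset.mem_erase.mpr ⟨hi, hin⟩)
            simp [hZ, hi', hi, hsupp x hx i hns]
      have := W _ hT _ hx hZT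
      rw [← this, Finset.sum_apply]
    -- find the coordinate k which pairs with i₀
    obtain ⟨a, ha⟩ := exists_ne (0 : L i₀)
    obtain ⟨x₁, hx₁, hx₁a⟩ := hproj i₀ hi₀ a
    have hych : ∀ k : {k // k ∈ s'}, ∃ y ∈ h, Z y = Pi.single (k : ι) (x₁ (k : ι)) :=
      fun k => hsingle k k.2 _
    choose y₁ hy₁ hZy₁ using hych
    have hx₁sum : x₁ i₀ = ∑ k ∈ s'.attach, y₁ k i₀ := hsum x₁ hx₁ y₁ hy₁ hZy₁
    have : ∃ k ∈ s'.attach, y₁ k i₀ ≠ 0 := by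
      by_contra hcon
      push_neg at hcon
      rw [Finset.sum_eq_zero hcon] at hx₁sum
      exact ha (hx₁a ▸ hx₁sum)
    obtain ⟨⟨k, hk⟩, -, hk0⟩ := this
    have hkι : k ∈ s := (Finset.mem_erase.mp hk).2
    have hki₀ : k ≠ i₀ := (Finset.mem_erase.mp hk).1
    -- define the map φ : L k → L i₀
    have hgr : ∀ c : L k, ∃ x ∈ h, Z x = Pi.single k c := fun c => hsingle k hk c
    choose w hw hZw using hgr
    set φ : L k → L i₀ := fun c => w c i₀ with hφ
    have hφeq : ∀ c : L k, ∀ x ∈ h, Z x = Pi.single k c → φ c = x i₀ :=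
      fun c x hx hx' => W _ (hw c) _ hx (by rw [hZw, hx'])
    -- φ is a Lie algebra homomorphism
    have hφadd : ∀ c c' : L k, φ (c + c') = φ c + φ c' := by
      intro c c'
      have : Z (w c + w c') = Pi.single k (c + c') := by
        rw [map_add Z, hZw, hZw, Pi.single_add]
      have := hφeq (c + c') _ (add_mem (hw c) (hw c')) this
      simpa using this
    have hφsmul : ∀ (t : K) (c : L k), φ (t • c) = t • φ c := by
      intro t c
      have : Z (t • w c) = Pi.single k (t • c) := by
        rw [map_smul Z, hZw, Pi.single_smul]
      have := hφeq (t • c) _ (h.smul_mem t (hw c)) this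
      simpa using this
    have hφlie : ∀ c c' : L k, φ ⁅c, c'⁆ = ⁅φ c, φ c'⁆ := by
      intro c c'
      have : Z ⁅w c, w c'⁆ = Pi.single k ⁅c, c'⁆ := by
        rw [LieHom.map_lie, hZw, hZw, single_lie_single]
      have := hφeq ⁅c, c'⁆ _ (h.lie_mem (hw c) (hw c')) this
      simpa using this
    -- the key bracket identity : ⁅z i₀, φ c⁆ = φ ⁅z k, c⁆ for z ∈ h
    have hkey : ∀ z ∈ h, ∀ c : L k, ⁅z i₀, φ c⁆ = φ ⁅z k, c⁆ := by
      intro z hz c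
      have h1 : Z ⁅z, w c⁆ = Pi.single k ⁅z k, c⁆ := by
        rw [LieHom.map_lie, hZw, lie_single]
        have hzk : Z z k = z k := by simp [hZ, hki₀]
        rw [hzk]
      have := hφeq ⁅z k, c⁆ _ (h.lie_mem hz (hw c)) h1
      rw [this]
      rfl
    have hφ0 : φ ≠ 0 := by
      intro hcon
      have : φ (x₁ k) = y₁ ⟨k, hk⟩ i₀ := hφeq _ _ (hy₁ _) (hZy₁ ⟨k, hk⟩)
      rw [hcon] at this
      exact hk0 this.symm
    obtain ⟨cw, hcw⟩ : ∃ c : L k, φ c ≠ 0 := by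
      by_contra hcon
      push_neg at hcon
      exact hφ0 (funext hcon)
    -- surjectivity of φ via the range ideal
    have hφsurj : Function.Surjective φ := by
      let I : LieIdeal K (L i₀) :=
        { carrier := {b | ∃ c, φ c = b}
          add_mem' := fun {b b'} hb hb' => by
            obtain ⟨c, hc⟩ := hb
            obtain ⟨c', hc'⟩ := hb'
            exact ⟨c + c', by rw [hφadd, hc, hc']⟩
          zero_mem' := ⟨0, by
            have : Z (0 : ∀ i, L i) = Pi.single k (0 : L k) := by simp
            have := hφeq 0 0 h.zero_mem this
            simpa using this⟩
          smul_mem' := fun t b hb => by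
            obtain ⟨c, hc⟩ := hb
            exact ⟨t • c, by rw [hφsmul, hc]⟩
          lie_mem := fun {b₀ b} hb => by
            obtain ⟨c, hc⟩ := hb
            obtain ⟨z, hz, hzi⟩ := hproj i₀ hi₀ b₀
            exact ⟨⁅z k, c⁆, by rw [← hkey z hz c, hc, hzi]⟩ }
      rcases LieAlgebra.IsSimple.eq_bot_or_eq_top (R := K) I with hI | hI
      · exfalso
        have : φ cw ∈ I := ⟨cw, rfl⟩
        rw [hI] at this
        exact hcw (by simpa using this)
      · intro b
        have : b ∈ (⊤ : LieIdeal K (L i₀)) := trivial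
        rw [← hI] at this
        exact this
    -- injectivity of φ via the kernel ideal
    have hφinj : Function.Injective φ := by
      let Kr : LieIdeal K (L k) :=
        { carrier := {c | φ c = 0}
          add_mem' := fun {c c'} hc hc' => by
            simp only [Set.mem_setOf_eq] at *
            rw [hφadd, hc, hc', add_zero]
          zero_mem' := by
            have : Z (0 : ∀ i, L i) = Pi.single k (0 : L k) := by simp
            have := hφeq 0 0 h.zero_mem this
            simpa using this
          smul_mem' := fun t c hc => by
            simp only [Set.mem_setOf_eq] at *
            rw [hφsmul, hc, smul_zero]
          lie_mem := fun {b c} hc => by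
            simp only [Set.mem_setOf_eq] at *
            obtain ⟨z, hz, hzk⟩ := hproj k hkι b
            rw [← hzk, ← hkey z hz c, hc, lie_zero] }
      rcases LieAlgebra.IsSimple.eq_bot_or_eq_top (R := K) Kr with hKr | hKr
      · intro c c' hcc
        have hsub : φ (c - c') = 0 := by
          have hdc : c - c' = c + (-1 : K) • c' := by
            rw [neg_one_smul, ← sub_eq_add_neg]
          rw [hdc, hφadd, hφsmul, neg_one_smul, hcc, ← sub_eq_add_neg, sub_self]
        have hcKr : c - c' ∈ Kr := hsub
        rw [hKr] at hcKr
        have : c - c' = 0 := by simpa using hcKr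
        exact sub_eq_zero.mp this
      · exfalso
        apply hcw
        have : cw ∈ Kr := by rw [hKr]; trivial
        exact this
    -- assemble the Lie algebra isomorphism
    let φh : L k →ₗ⁅K⁆ L i₀ :=
      { toFun := φ
        map_add' := hφadd
        map_smul' := hφsmul
        map_lie' := fun {c c'} => hφlie c c' }
    let e : L k ≃ₗ⁅K⁆ L i₀ := LieEquiv.ofBijective φh ⟨hφinj, hφsurj⟩
    refine ⟨k, hkι, i₀, hi₀, hki₀, e, ?_⟩
    -- the global graph property
    intro x hx
    have hych' : ∀ k' : {k' // k' ∈ s'}, ∃ y ∈ h, Z y = Pi.single (k' : ι) (x (k' : ι)) :=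
      fun k' => hsingle k' k'.2 _
    choose y hy hZy using hych'
    have hxsum : x i₀ = ∑ k' ∈ s'.attach, y k' i₀ := hsum x hx y hy hZy
    have hvanish : ∀ k' : {k' // k' ∈ s'}, (k' : ι) ≠ k → y k' i₀ = 0 := by
      intro k' hk'
      apply eq_zero_of_lie_all (K := K)
      intro b
      obtain ⟨c, hc⟩ := hφsurj b
      have hbr : ⁅y k', w c⁆ ∈ h := h.lie_mem (hy k') (hw c)
      have hZbr : Z ⁅y k', w c⁆ = 0 := by
        rw [LieHom.map_lie, hZy, hZw]
        funext i
        rcases eq_or_ne i (k' : ι) with rfl | hik'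
        · simp [Pi.single_eq_of_ne hk']
        · simp [Pi.single_eq_of_ne hik']
      have hz0 : Z (0 : ∀ i, L i) = 0 := Z.map_zero
      have hW0 := W _ hbr _ h.zero_mem (by rw [hZbr, hz0])
      have h2 : ⁅y k' i₀, φ c⁆ = 0 := by simpa [hφ] using hW0
      rw [← hc, ← lie_skew, h2, neg_zero]
    have hyk : y ⟨k, hk⟩ i₀ = φ (x k) := by
      have := hφeq (x k) _ (hy ⟨k, hk⟩) (hZy ⟨k, hk⟩)
      exact this.symm
    have hsum2 : ∑ k' ∈ s'.attach, y k' i₀ = y ⟨k, hk⟩ i₀ :=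
      Finset.sum_eq_single_of_mem (⟨k, hk⟩ : {k' // k' ∈ s'}) (Finset.mem_attach _ _)
        (fun b _ hb => hvanish b (fun hbk => hb (Subtype.ext hbk)))
    rw [hxsum, hsum2, hyk]
    rfl
  · -- Case A : recurse on s' = s.erase i₀
    push_neg at hfull
    obtain ⟨f, hfsupp, hfne⟩ := hfull
    have hss : s' ⊂ s := Finset.erase_ssubset hi₀
    have hmap := IH s' hss (h.map Z)
    have h1 : ∀ x ∈ h.map Z, ∀ i ∉ s', x i = 0 := by
      intro x hx i hi
      obtain ⟨y, hy, hyx⟩ := (LieSubalgebra.mem_map _ _ _).mp hx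
      rcases eq_or_ne i i₀ with rfl | hii₀
      · rw [← hyx]; simp [hZ]
      · have : i ∉ s := fun hin => hi (Finset.mem_erase.mpr ⟨hii₀, hin⟩)
        rw [← hyx]
        simp [hZ, hii₀, hsupp y hy i this]
    have h2 : ∀ i ∈ s', ∀ a : L i, ∃ x ∈ h.map Z, x i = a := by
      intro i hi a
      obtain ⟨x, hx, hxa⟩ := hproj i (Finset.mem_erase.mp hi).2 a
      refine ⟨Z x, (LieSubalgebra.mem_map _ _ _).mpr ⟨x, hx, rfl⟩, ?_⟩
      simp [hZ, (Finset.mem_erase.mp hi).1, hxa]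
    have h3 : ∃ g : ∀ i, L i, (∀ i ∉ s', g i = 0) ∧ g ∉ h.map Z := by
      refine ⟨f, hfsupp, fun hf => ?_⟩
      obtain ⟨y, hy, hyx⟩ := (LieSubalgebra.mem_map _ _ _).mp hf
      exact hfne y hy hyx
    obtain ⟨i, hi, j, hj, hij, e, he⟩ := hmap h1 h2 h3
    refine ⟨i, (Finset.mem_erase.mp hi).2, j, (Finset.mem_erase.mp hj).2, hij, e, ?_⟩
    intro x hx
    have := he (Z x) ((LieSubalgebra.mem_map _ _ _).mpr ⟨x, hx, rfl⟩)
    simpa [hZ, (Finset.mem_erase.mp hi).1, (Finset.mem_erase.mp hj).1] using this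

end AuxLemmas

/-- If a Lie subalgebra of a finite product of simple Lie algebras surjects onto every
factor but is not the whole product, then two distinct coordinates are identified by an
isomorphism of the corresponding simple factors. -/
theorem stmt_3 (K : Type*) [Field K] (ι : Type*) [Finite ι]
    (L : ι → Type*) [∀ i, LieRing (L i)] [∀ i, LieAlgebra K (L i)]
    [∀ i, LieAlgebra.IsSimple K (L i)]
    (h : LieSubalgebra K (∀ i, L i))
    (hproj : ∀ i : ι, Function.Surjective fun x : h => (x : ∀ i, L i) i)
    (hne : h ≠ ⊤) :
    ∃ i j : ι, i ≠ j ∧ ∃ e : L i ≃ₗ⁅K⁆ L j, ∀ x ∈ h, x j = e (x i) := by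
  classical
  have := Fintype.ofFinite ι
  obtain ⟨i, -, j, -, hij, e, he⟩ :=
    aux_main (K := K) (L := L) Finset.univ h
      (fun x _ i hi => absurd (Finset.mem_univ i) hi)
      (fun i _ a => by
        obtain ⟨⟨x, hx⟩, hxa⟩ := hproj i a
        exact ⟨x, hx, hxa⟩)
      (by
        by_contra hcon
        push_neg at hcon
        apply hne
        ext x
        simp only [LieSubalgebra.mem_top, iff_true]
        exact hcon x (fun i hi => absurd (Finset.mem_univ i) hi))
  exact ⟨i, j, hij, e, he⟩
end
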